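/- Since λ ≥ 0, the performance difference lemma implies the lower bound η_{π̃} ≥ η_π + (1-γ) E_{τ|π̃}[∑_t γ^t A^λ_π(s_t,a_t)]. -/

import Mathlib

open Finset

set_option maxHeartbeats 1000000

/-- t-step iterate of a transition kernel on a finite space. -/
noncomputable def kerPow {T : Type*} [Fintype T] [DecidableEq T] (K : T → T → ℝ) :
    ℕ → T → T → ℝ
  | 0 => fun s s' => if s = s' then 1 else 0
  | (t + 1) => fun s s' => ∑ u, K s u * kerPow K t u s'

/-- State-action transition kernel induced by the MDP dynamics `P` and the policy `π`. -/
def saKer {S A : Type*} (P : S → A → S → ℝ) (π : S → A → ℝ) :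
    S × A → S × A → ℝ :=
  fun p q => P p.1 p.2 q.1 * π q.1 q.2

/-- Expected discounted sum of `f(s_t, a_t)` starting from `(s,a)`, following `π`. -/
noncomputable def Qgen {S A : Type*} [Fintype S] [Fintype A] [DecidableEq S] [DecidableEq A]
    (P : S → A → S → ℝ) (π : S → A → ℝ) (f : S → A → ℝ) (γ : ℝ) (s : S) (a : A) : ℝ :=
  ∑' t : ℕ, γ ^ t * ∑ p : S × A, kerPow (saKer P π) t (s, a) p * f p.1 p.2

/-- Expected discounted sum `E_{τ|π}[∑ₜ γ^t f(s_t,a_t)]` over trajectories started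
from the initial distribution `μ` and following `π`. -/
noncomputable def expDisc {S A : Type*} [Fintype S] [Fintype A] [DecidableEq S] [DecidableEq A]
    (P : S → A → S → ℝ) (π : S → A → ℝ) (μ : S → ℝ) (γ : ℝ) (f : S → A → ℝ) : ℝ :=
  ∑ s, μ s * ∑ a, π s a * Qgen P π f γ s a

lemma kerPow_nonneg {T : Type*} [Fintype T] [DecidableEq T] {K : T → T → ℝ}
    (hK : ∀ p q, 0 ≤ K p q) : ∀ t p q, 0 ≤ kerPow K t p q := by
  intro t
  induction t with
  | zero => intro p q; simp only [kerPow]; positivity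
  | succ t ih =>
      intro p q
      simp only [kerPow]
      exact Finset.sum_nonneg fun u _ => mul_nonneg (hK p u) (ih u q)

lemma kerPow_rowsum {T : Type*} [Fintype T] [DecidableEq T] {K : T → T → ℝ}
    (hK : ∀ p, ∑ q, K p q = 1) : ∀ t p, ∑ q, kerPow K t p q = 1 := by
  intro t
  induction t with
  | zero => intro p; simp [kerPow]
  | succ t ih =>
      intro p
      simp only [kerPow]
      rw [Finset.sum_comm]
      have : ∀ u, ∑ q, K p u * kerPow K t u q = K p u := by
        intro u; rw [← Finset.mul_sum, ih u, mul_one]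
      rw [Finset.sum_congr rfl fun u _ => this u, hK p]

lemma kerPow_le_one {T : Type*} [Fintype T] [DecidableEq T] {K : T → T → ℝ}
    (hK0 : ∀ p q, 0 ≤ K p q) (hK1 : ∀ p, ∑ q, K p q = 1) (t : ℕ) (p q : T) :
    kerPow K t p q ≤ 1 := by
  calc kerPow K t p q ≤ ∑ q', kerPow K t p q' :=
        Finset.single_le_sum (fun q' _ => kerPow_nonneg hK0 t p q') (Finset.mem_univ q)
    _ = 1 := kerPow_rowsum hK1 t p

lemma kerPow_succ_right {T : Type*} [Fintype T] [DecidableEq T] (K : T → T → ℝ) (t : ℕ)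
    (p q : T) : kerPow K (t + 1) p q = ∑ u, kerPow K t p u * K u q := by
  induction t generalizing p q with
  | zero => simp [kerPow]
  | succ t ih =>
      show ∑ u, K p u * kerPow K (t+1) u q = _
      have : ∀ u, K p u * kerPow K (t+1) u q = ∑ v, K p u * (kerPow K t u v * K v q) := by
        intro u; rw [ih, Finset.mul_sum]
      rw [Finset.sum_congr rfl fun u _ => this u, Finset.sum_comm]
      refine Finset.sum_congr rfl fun v _ => ?_
      show ∑ u, K p u * (kerPow K t u v * K v q) = kerPow K (t+1) p v * K v q
      simp only [kerPow, Finset.sum_mul, mul_assoc]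


section MV
set_option linter.unusedSectionVars false
set_option linter.unusedVariables false
variable {S A : Type*} [Fintype S] [Fintype A] [DecidableEq S] [DecidableEq A]
    {P : S → A → S → ℝ} {π : S → A → ℝ} {γ : ℝ}
    (hP0 : ∀ s a s', 0 ≤ P s a s') (hP1 : ∀ s a, ∑ s', P s a s' = 1)
    (hπ0 : ∀ s a, 0 ≤ π s a) (hπ1 : ∀ s, ∑ a, π s a = 1)
    (hγ0 : 0 ≤ γ) (hγ1 : γ < 1)

include hP0 hπ0 in
lemma saKer_nonneg : ∀ p q : S × A, 0 ≤ saKer P π p q :=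
  fun p q => mul_nonneg (hP0 _ _ _) (hπ0 _ _)

include hP1 hπ1 in
lemma saKer_rowsum : ∀ p : S × A, ∑ q, saKer P π p q = 1 := by
  intro p
  rw [Fintype.sum_prod_type]
  have : ∀ s', ∑ a', saKer P π p (s', a') = P p.1 p.2 s' := by
    intro s'
    simp only [saKer]
    rw [← Finset.mul_sum, hπ1 s', mul_one]
  rw [Finset.sum_congr rfl fun s' _ => this s', hP1 p.1 p.2]

include hP0 hP1 hπ0 hπ1 hγ0 hγ1 in
lemma summable_qgen (f : S → A → ℝ) (s : S) (a : A) :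
    Summable (fun t : ℕ => γ ^ t * ∑ p : S × A, kerPow (saKer P π) t (s, a) p * f p.1 p.2) := by
  apply Summable.of_norm_bounded (g := fun t => γ ^ t * ∑ p : S × A, |f p.1 p.2|)
      (((summable_geometric_of_lt_one hγ0 hγ1)).mul_right _)
  intro t
  rw [Real.norm_eq_abs, abs_mul, abs_pow, abs_of_nonneg hγ0]
  refine mul_le_mul_of_nonneg_left ?_ (pow_nonneg hγ0 t)
  calc |∑ p : S × A, kerPow (saKer P π) t (s, a) p * f p.1 p.2|
      ≤ ∑ p : S × A, |kerPow (saKer P π) t (s, a) p * f p.1 p.2| :=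
        Finset.abs_sum_le_sum_abs _ _
    _ ≤ ∑ p : S × A, |f p.1 p.2| := by
        refine Finset.sum_le_sum fun p _ => ?_
        rw [abs_mul, abs_of_nonneg (kerPow_nonneg (saKer_nonneg hP0 hπ0) t _ p)]
        exact mul_le_of_le_one_left (abs_nonneg _) (kerPow_le_one (saKer_nonneg hP0 hπ0)
          (saKer_rowsum hP1 hπ1) t _ p)

include hP0 hP1 hπ0 hπ1 hγ0 hγ1 in
lemma qgen_linear (c d : ℝ) (f g : S → A → ℝ) (s : S) (a : A) :
    Qgen P π (fun s a => c * f s a + d * g s a) γ s a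
      = c * Qgen P π f γ s a + d * Qgen P π g γ s a := by
  have h1 := summable_qgen hP0 hP1 hπ0 hπ1 hγ0 hγ1 f s a
  have h2 := summable_qgen hP0 hP1 hπ0 hπ1 hγ0 hγ1 g s a
  simp only [Qgen]
  rw [← tsum_mul_left, ← tsum_mul_left, ← Summable.tsum_add (h1.mul_left c) (h2.mul_left d)]
  refine tsum_congr fun t => ?_
  have : ∑ p : S × A, kerPow (saKer P π) t (s, a) p * (c * f p.1 p.2 + d * g p.1 p.2)
      = c * ∑ p : S × A, kerPow (saKer P π) t (s, a) p * f p.1 p.2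
        + d * ∑ p : S × A, kerPow (saKer P π) t (s, a) p * g p.1 p.2 := by
    rw [Finset.mul_sum, Finset.mul_sum, ← Finset.sum_add_distrib]
    exact Finset.sum_congr rfl fun p _ => by ring
  rw [this]; ring

include hP1 hπ1 hγ0 hγ1 in
lemma qgen_const (c : ℝ) (s : S) (a : A) :
    Qgen P π (fun _ _ => c) γ s a = c / (1 - γ) := by
  simp only [Qgen]
  have : ∀ t : ℕ, γ ^ t * ∑ p : S × A, kerPow (saKer P π) t (s, a) p * c = γ ^ t * c := by
    intro t
    rw [← Finset.sum_mul, kerPow_rowsum (saKer_rowsum hP1 hπ1) t, one_mul]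
  rw [tsum_congr this, tsum_mul_right, tsum_geometric_of_lt_one hγ0 hγ1,
    div_eq_mul_inv, mul_comm]

include hP0 hP1 hπ0 hπ1 hγ0 hγ1 in
lemma qgen_bellman (f : S → A → ℝ) (s : S) (a : A) :
    Qgen P π f γ s a
      = f s a + γ * ∑ s', P s a s' * ∑ a', π s' a' * Qgen P π f γ s' a' := by
  have hsum := summable_qgen hP0 hP1 hπ0 hπ1 hγ0 hγ1 f s a
  simp only [Qgen]
  rw [Summable.tsum_eq_zero_add hsum]
  have h0 : γ ^ 0 * ∑ p : S × A, kerPow (saKer P π) 0 (s, a) p * f p.1 p.2 = f s a := by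
    simp [kerPow, Finset.sum_ite_eq, ite_mul]
  rw [h0]
  congr 1
  have hterm : ∀ t : ℕ,
      γ ^ (t + 1) * ∑ p : S × A, kerPow (saKer P π) (t + 1) (s, a) p * f p.1 p.2
        = ∑ u : S × A, saKer P π (s, a) u *
            (γ * (γ ^ t * ∑ p : S × A, kerPow (saKer P π) t u p * f p.1 p.2)) := by
    intro t
    have h1 : ∑ p : S × A, kerPow (saKer P π) (t + 1) (s, a) p * f p.1 p.2
        = ∑ p : S × A, ∑ u : S × A,
            saKer P π (s, a) u * kerPow (saKer P π) t u p * f p.1 p.2 := by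
      refine Finset.sum_congr rfl fun p _ => ?_
      show (∑ u, saKer P π (s, a) u * kerPow (saKer P π) t u p) * f p.1 p.2 = _
      rw [Finset.sum_mul]
    rw [h1]
    simp only [Finset.mul_sum]
    rw [Finset.sum_comm]
    exact Finset.sum_congr rfl fun u _ => Finset.sum_congr rfl fun p _ => by ring
  rw [tsum_congr hterm]
  rw [Summable.tsum_finsetSum fun u _ =>
    ((summable_qgen hP0 hP1 hπ0 hπ1 hγ0 hγ1 f u.1 u.2).mul_left γ).mul_left (saKer P π (s, a) u)]
  simp only [tsum_mul_left]
  rw [Fintype.sum_prod_type]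
  simp only [Finset.mul_sum, Qgen, saKer]
  exact Finset.sum_congr rfl fun s' _ => Finset.sum_congr rfl fun a' _ => by ring

include hP0 hP1 hπ0 hπ1 hγ0 hγ1 in
lemma qgen_telescope (V : S → ℝ) (s : S) (a : A) :
    Qgen P π (fun s' a' => V s' - γ * ∑ s'', P s' a' s'' * V s'') γ s a = V s := by
  have hb : Summable (fun t : ℕ => γ ^ t * ∑ p : S × A, kerPow (saKer P π) t (s, a) p * V p.1) :=
    summable_qgen hP0 hP1 hπ0 hπ1 hγ0 hγ1 (fun s' _ => V s') s a
  have hterm : ∀ t : ℕ,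
      γ ^ t * ∑ p : S × A, kerPow (saKer P π) t (s, a) p *
          (V p.1 - γ * ∑ s'', P p.1 p.2 s'' * V s'')
        = (γ ^ t * ∑ p : S × A, kerPow (saKer P π) t (s, a) p * V p.1)
          - (γ ^ (t + 1) * ∑ p : S × A, kerPow (saKer P π) (t + 1) (s, a) p * V p.1) := by
    intro t
    have step1 : ∀ p : S × A, ∑ s'', P p.1 p.2 s'' * V s''
        = ∑ q : S × A, saKer P π p q * V q.1 := by
      intro p
      rw [Fintype.sum_prod_type]
      refine Finset.sum_congr rfl fun s'' _ => ?_
      simp only [saKer]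
      calc P p.1 p.2 s'' * V s'' = P p.1 p.2 s'' * V s'' * ∑ a'', π s'' a'' := by
            rw [hπ1 s'', mul_one]
        _ = ∑ a'', P p.1 p.2 s'' * π s'' a'' * V s'' := by
            rw [Finset.mul_sum]; exact Finset.sum_congr rfl fun a'' _ => by ring
    have step2 : ∑ p : S × A, kerPow (saKer P π) t (s, a) p * (∑ s'', P p.1 p.2 s'' * V s'')
        = ∑ q : S × A, kerPow (saKer P π) (t + 1) (s, a) q * V q.1 := by
      calc ∑ p : S × A, kerPow (saKer P π) t (s, a) p * (∑ s'', P p.1 p.2 s'' * V s'')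
          = ∑ p : S × A, ∑ q : S × A,
              kerPow (saKer P π) t (s, a) p * (saKer P π p q * V q.1) := by
            refine Finset.sum_congr rfl fun p _ => ?_
            rw [step1 p, Finset.mul_sum]
        _ = ∑ q : S × A, (∑ p : S × A, kerPow (saKer P π) t (s, a) p * saKer P π p q) * V q.1 := by
            rw [Finset.sum_comm]
            refine Finset.sum_congr rfl fun q _ => ?_
            rw [Finset.sum_mul]
            exact Finset.sum_congr rfl fun p _ => by ring
        _ = ∑ q : S × A, kerPow (saKer P π) (t + 1) (s, a) q * V q.1 := by
            refine Finset.sum_congr rfl fun q _ => ?_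
            rw [kerPow_succ_right]
    have split : ∑ p : S × A, kerPow (saKer P π) t (s, a) p *
          (V p.1 - γ * ∑ s'', P p.1 p.2 s'' * V s'')
        = (∑ p : S × A, kerPow (saKer P π) t (s, a) p * V p.1)
          - γ * ∑ p : S × A, kerPow (saKer P π) t (s, a) p * (∑ s'', P p.1 p.2 s'' * V s'') := by
      rw [Finset.mul_sum, ← Finset.sum_sub_distrib]
      exact Finset.sum_congr rfl fun p _ => by ring
    rw [split, step2]; ring
  simp only [Qgen]
  rw [tsum_congr hterm, Summable.tsum_sub hb ((summable_nat_add_iff 1).2 hb)]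
  have h3 := Summable.tsum_eq_zero_add hb
  have hc0 : γ ^ 0 * ∑ p : S × A, kerPow (saKer P π) 0 (s, a) p * V p.1 = V s := by
    simp [kerPow, Finset.sum_ite_eq, ite_mul]
  linarith [h3, hc0.symm]

include hP0 hP1 hπ0 hπ1 hγ0 hγ1 in
lemma expDisc_linear (μ : S → ℝ) (c d : ℝ) (f g : S → A → ℝ) :
    expDisc P π μ γ (fun s a => c * f s a + d * g s a)
      = c * expDisc P π μ γ f + d * expDisc P π μ γ g := by
  simp only [expDisc]
  have h : ∀ s, μ s * ∑ a, π s a * Qgen P π (fun s a => c * f s a + d * g s a) γ s a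
      = c * (μ s * ∑ a, π s a * Qgen P π f γ s a)
        + d * (μ s * ∑ a, π s a * Qgen P π g γ s a) := by
    intro s
    have h2 : ∑ a, π s a * Qgen P π (fun s a => c * f s a + d * g s a) γ s a
        = c * ∑ a, π s a * Qgen P π f γ s a + d * ∑ a, π s a * Qgen P π g γ s a := by
      rw [Finset.mul_sum, Finset.mul_sum, ← Finset.sum_add_distrib]
      refine Finset.sum_congr rfl fun a _ => ?_
      rw [qgen_linear hP0 hP1 hπ0 hπ1 hγ0 hγ1]; ring
    rw [h2]; ring
  rw [Finset.sum_congr rfl fun s _ => h s, Finset.sum_add_distrib,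
    ← Finset.mul_sum, ← Finset.mul_sum]

include hP1 hπ1 hγ0 hγ1 in
lemma expDisc_const (μ : S → ℝ) (hμ1 : ∑ s, μ s = 1) (c : ℝ) :
    expDisc P π μ γ (fun _ _ => c) = c / (1 - γ) := by
  simp only [expDisc]
  have h : ∀ s, μ s * ∑ a, π s a * Qgen P π (fun _ _ => c) γ s a = μ s * (c / (1 - γ)) := by
    intro s
    congr 1
    rw [Finset.sum_congr rfl fun a _ => by rw [qgen_const hP1 hπ1 hγ0 hγ1],
      ← Finset.sum_mul, hπ1 s, one_mul]
  rw [Finset.sum_congr rfl fun s _ => h s, ← Finset.sum_mul, hμ1, one_mul]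

include hP0 hP1 hπ0 hπ1 hγ0 hγ1 in
lemma pdl (πt : S → A → ℝ) (hπt0 : ∀ s a, 0 ≤ πt s a) (hπt1 : ∀ s, ∑ a, πt s a = 1)
    (μ : S → ℝ) (f : S → A → ℝ) :
    expDisc P πt μ γ f = expDisc P π μ γ f
      + expDisc P πt μ γ
          (fun s a => Qgen P π f γ s a - ∑ a', π s a' * Qgen P π f γ s a') := by
  have hfeq : f = fun s a =>
      1 * (Qgen P π f γ s a - ∑ a', π s a' * Qgen P π f γ s a')
      + 1 * ((∑ a', π s a' * Qgen P π f γ s a')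
          - γ * ∑ s', P s a s' * ∑ a', π s' a' * Qgen P π f γ s' a') := by
    funext s a
    linear_combination -(qgen_bellman hP0 hP1 hπ0 hπ1 hγ0 hγ1 f s a)
  have hq : ∀ s a, Qgen P πt f γ s a
      = Qgen P πt (fun s a => Qgen P π f γ s a - ∑ a', π s a' * Qgen P π f γ s a') γ s a
        + ∑ a', π s a' * Qgen P π f γ s a' := by
    intro s a
    conv_lhs => rw [hfeq]
    rw [qgen_linear hP0 hP1 hπt0 hπt1 hγ0 hγ1,
      qgen_telescope hP0 hP1 hπt0 hπt1 hγ0 hγ1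
        (fun s => ∑ a', π s a' * Qgen P π f γ s a') s a]
    ring
  simp only [expDisc]
  rw [← Finset.sum_add_distrib]
  refine Finset.sum_congr rfl fun s _ => ?_
  have h2 : ∑ a, πt s a * Qgen P πt f γ s a
      = (∑ a, πt s a *
          Qgen P πt (fun s a => Qgen P π f γ s a - ∑ a', π s a' * Qgen P π f γ s a') γ s a)
        + ∑ a', π s a' * Qgen P π f γ s a' := by
    rw [Finset.sum_congr rfl fun a _ => by rw [hq s a]]
    rw [Finset.sum_congr rfl (fun a _ => mul_add (πt s a) _ _), Finset.sum_add_distrib]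
    congr 1
    rw [← Finset.sum_mul, hπt1 s, one_mul]
  rw [h2]; ring

end MV

/-- Lower bound from the mean-volatility performance difference lemma (λ ≥ 0). -/
theorem stmt_11 {S A : Type*} [Fintype S] [Fintype A] [DecidableEq S] [DecidableEq A]
    (P : S → A → S → ℝ) (π πt : S → A → ℝ) (R : S → A → ℝ) (γ lam : ℝ) (μ : S → ℝ)
    (hP0 : ∀ s a s', 0 ≤ P s a s') (hP1 : ∀ s a, ∑ s', P s a s' = 1)
    (hπ0 : ∀ s a, 0 ≤ π s a) (hπ1 : ∀ s, ∑ a, π s a = 1)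
    (hπt0 : ∀ s a, 0 ≤ πt s a) (hπt1 : ∀ s, ∑ a, πt s a = 1)
    (hμ0 : ∀ s, 0 ≤ μ s) (hμ1 : ∑ s, μ s = 1)
    (hγ0 : 0 ≤ γ) (hγ1 : γ < 1) (hlam : 0 ≤ lam)
    (Jπ Jπt ν2π ν2πt ηπ ηπt : ℝ)
    (Q : S → A → ℝ) (V : S → ℝ) (X : S → A → ℝ) (W : S → ℝ)
    (Adv AdvL : S → A → ℝ)
    (hJπ : Jπ = (1 - γ) * expDisc P π μ γ R)
    (hJπt : Jπt = (1 - γ) * expDisc P πt μ γ R)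
    (hν2π : ν2π = (1 - γ) * expDisc P π μ γ (fun s a => (R s a - Jπ) ^ 2))
    (hν2πt : ν2πt = (1 - γ) * expDisc P πt μ γ (fun s a => (R s a - Jπt) ^ 2))
    (hηπ : ηπ = Jπ - lam * ν2π) (hηπt : ηπt = Jπt - lam * ν2πt)
    (hQ : ∀ s a, Q s a = Qgen P π R γ s a)
    (hV : ∀ s, V s = ∑ a, π s a * Q s a)
    (hX : ∀ s a, X s a = Qgen P π (fun s' a' => (R s' a' - Jπ) ^ 2) γ s a)
    (hW : ∀ s, W s = ∑ a, π s a * X s a)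
    (hA : ∀ s a, Adv s a = Q s a - V s)
    (hAL : ∀ s a, AdvL s a = Q s a - lam * X s a - (V s - lam * W s)) :
    ηπt ≥ ηπ + (1 - γ) * expDisc P πt μ γ AdvL := by
  have hAdvfun : Adv = fun s a => Qgen P π R γ s a - ∑ a', π s a' * Qgen P π R γ s a' := by
    funext s a; simp only [hA, hV, hQ]
  have hXWfun : (fun s a => X s a - W s)
      = fun s a => Qgen P π (fun s a => (R s a - Jπ) ^ 2) γ s a
          - ∑ a', π s a' * Qgen P π (fun s a => (R s a - Jπ) ^ 2) γ s a' := by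
    funext s a; simp only [hX, hW]
  have F1 : expDisc P πt μ γ R = expDisc P π μ γ R + expDisc P πt μ γ Adv := by
    rw [pdl hP0 hP1 hπ0 hπ1 hγ0 hγ1 πt hπt0 hπt1 μ R, ← hAdvfun]
  have F2 : expDisc P πt μ γ (fun s a => (R s a - Jπ) ^ 2)
      = expDisc P π μ γ (fun s a => (R s a - Jπ) ^ 2)
        + expDisc P πt μ γ (fun s a => X s a - W s) := by
    rw [pdl hP0 hP1 hπ0 hπ1 hγ0 hγ1 πt hπt0 hπt1 μ _, ← hXWfun]
  have hsqfun : (fun s a => (R s a - Jπt) ^ 2)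
      = fun s a => 1 * (R s a - Jπ) ^ 2
          + 1 * ((2 * (Jπ - Jπt)) * R s a + (Jπt ^ 2 - Jπ ^ 2) * (fun (_ : S) (_ : A) => (1:ℝ)) s a) := by
    funext s a; ring
  have c1 : expDisc P πt μ γ (fun _ _ => (1:ℝ)) = 1 / (1 - γ) :=
    expDisc_const hP1 hπt1 hγ0 hγ1 μ hμ1 1
  have F3 : expDisc P πt μ γ (fun s a => (R s a - Jπt) ^ 2)
      = expDisc P πt μ γ (fun s a => (R s a - Jπ) ^ 2)
        + (2 * (Jπ - Jπt)) * expDisc P πt μ γ R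
        + (Jπt ^ 2 - Jπ ^ 2) * (1 / (1 - γ)) := by
    rw [hsqfun, expDisc_linear hP0 hP1 hπt0 hπt1 hγ0 hγ1,
      expDisc_linear hP0 hP1 hπt0 hπt1 hγ0 hγ1, c1]
    ring
  have hALfun : AdvL = fun s a => 1 * Adv s a + (-lam) * (X s a - W s) := by
    funext s a; rw [hAL, hA]; ring
  have F4 : expDisc P πt μ γ AdvL
      = expDisc P πt μ γ Adv - lam * expDisc P πt μ γ (fun s a => X s a - W s) := by
    rw [hALfun, expDisc_linear hP0 hP1 hπt0 hπt1 hγ0 hγ1]; ring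
  have hJ : Jπt = Jπ + (1 - γ) * expDisc P πt μ γ Adv := by
    rw [hJπt, F1, hJπ]; ring
  have hne : (1 : ℝ) - γ ≠ 0 := by linarith
  have hc1' : (1 - γ) * ((Jπt ^ 2 - Jπ ^ 2) * (1 / (1 - γ))) = Jπt ^ 2 - Jπ ^ 2 := by
    field_simp
  have hνt : ν2πt = ν2π + (1 - γ) * expDisc P πt μ γ (fun s a => X s a - W s)
      - (Jπt - Jπ) ^ 2 := by
    rw [hν2πt, F3, F2]
    linear_combination (-1 : ℝ) * hν2π + (-2 * (Jπ - Jπt)) * hJπt + hc1'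
  have goal' : ηπt = ηπ + (1 - γ) * expDisc P πt μ γ AdvL + lam * (Jπt - Jπ) ^ 2 := by
    rw [hηπt, hηπ, F4, hνt, hJ]; ring
  rw [goal']
  have : 0 ≤ lam * (Jπt - Jπ) ^ 2 := mul_nonneg hlam (sq_nonneg _)
  linarith
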